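/- Let n ≥ 2 and let R > 1 be large enough that (log(R/r))² - 3·log(R/r) + 1 > 0 for all r ∈ (0,1]. Define α(r) = ((2+n)·log(R/r) - 1) / ((log(R/r))² - 3·log(R/r) + 1) and u(x) = x₁ x₂ (log(R/|x|))² for x ∈ ℝⁿ \ {0}. Then for every x with 0 < |x| < 1, the trace of (I + α(|x|)·(x/|x|) ⊗ (x/|x|)) · D²u(x) equals 0; that is, u solves the non-divergence elliptic equation L_α u = 0 in the punctured unit ball. -/

import Mathlib

open Set Real

namespace BMOaux

variable {n : ℕ}

noncomputable def qf (y : EuclideanSpace ℝ (Fin n)) : ℝ := ∑ i, y i * y i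

noncomputable def wf (R : ℝ) (y : EuclideanSpace ℝ (Fin n)) : ℝ :=
  Real.log R - 2⁻¹ * Real.log (qf y)

/-- delta symbol -/
noncomputable def Sd (j k : Fin n) : ℝ := if k = j then 1 else 0

lemma single_apply_Sd (j k : Fin n) : (EuclideanSpace.single j (1:ℝ)) k = Sd j k := by
  simp [Sd]

lemma qf_eq (y : EuclideanSpace ℝ (Fin n)) : qf y = ‖y‖ ^ 2 := by
  rw [EuclideanSpace.norm_eq, Real.sq_sqrt (by positivity)]
  simp [qf, sq, Real.norm_eq_abs, abs_mul_abs_self]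

lemma qf_pos {y : EuclideanSpace ℝ (Fin n)} (hy : y ≠ 0) : 0 < qf y := by
  rw [qf_eq]
  have : 0 < ‖y‖ := norm_pos_iff.2 hy
  positivity

lemma hasFDerivAt_qf (y : EuclideanSpace ℝ (Fin n)) :
    HasFDerivAt qf (∑ i, (2 * y i) • EuclideanSpace.proj (𝕜 := ℝ) i) y := by
  have h : ∀ i ∈ Finset.univ, HasFDerivAt (fun z : EuclideanSpace ℝ (Fin n) => z i * z i)
      ((2 * y i) • EuclideanSpace.proj (𝕜 := ℝ) i) y := by
    intro i _
    have := ((EuclideanSpace.proj (𝕜 := ℝ) i).hasFDerivAt (x := y)).mul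
      ((EuclideanSpace.proj (𝕜 := ℝ) i).hasFDerivAt (x := y))
    refine this.congr_fderiv ?_
    ext v
    simp [two_mul, add_smul]
  exact HasFDerivAt.fun_sum h

lemma hasFDerivAt_wf (R : ℝ) {y : EuclideanSpace ℝ (Fin n)} (hy : y ≠ 0) :
    HasFDerivAt (wf R) ((-(2 * qf y)⁻¹) • ∑ i, (2 * y i) • EuclideanSpace.proj (𝕜 := ℝ) i) y := by
  have hq := hasFDerivAt_qf (n := n) y
  have hlog := (Real.hasDerivAt_log (qf_pos hy).ne').comp_hasFDerivAt y hq
  have h := (hasFDerivAt_const (Real.log R) y).sub (hlog.const_mul (2:ℝ)⁻¹)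
  have heq : ((0 : EuclideanSpace ℝ (Fin n) →L[ℝ] ℝ) -
      (2:ℝ)⁻¹ • ((qf y)⁻¹ • ∑ i, (2 * y i) • EuclideanSpace.proj (𝕜 := ℝ) i)) =
      (-(2 * qf y)⁻¹) • ∑ i, (2 * y i) • EuclideanSpace.proj (𝕜 := ℝ) i := by
    ext v
    have hq0 := (qf_pos hy).ne'
    simp [smul_eq_mul]
    ring
  exact heq ▸ h

end BMOaux

namespace BMOaux2
open BMOaux

noncomputable def G {n : ℕ} (R : ℝ) (a b j : Fin n) (y : EuclideanSpace ℝ (Fin n)) : ℝ :=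
  wf R y * wf R y * (y b * Sd j a + y a * Sd j b)
    - wf R y * (qf y)⁻¹ * (y a * y b) * (2 * y j)

lemma wf_eq {n : ℕ} {R : ℝ} (hR : 0 < R) {y : EuclideanSpace ℝ (Fin n)} (hy : y ≠ 0) :
    wf R y = Real.log (R / ‖y‖) := by
  have h0 : ‖y‖ ≠ 0 := norm_ne_zero_iff.2 hy
  rw [wf, qf_eq, Real.log_pow, Real.log_div hR.ne' h0]
  push_cast
  ring

lemma fderiv_u_apply {n : ℕ} {R : ℝ} (hR : 0 < R) {u : EuclideanSpace ℝ (Fin n) → ℝ}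
    (a b : Fin n) (hu : ∀ y, u y = y a * y b * (Real.log (R / ‖y‖))^2)
    {y : EuclideanSpace ℝ (Fin n)} (hy : y ≠ 0) (j : Fin n) :
    fderiv ℝ u y (EuclideanSpace.single j 1) = G R a b j y := by
  have hw := hasFDerivAt_wf (n := n) R hy
  have huu := (((EuclideanSpace.proj (𝕜 := ℝ) a).hasFDerivAt (x := y)).mul
      ((EuclideanSpace.proj (𝕜 := ℝ) b).hasFDerivAt (x := y))).mul (hw.mul hw)
  have hev : u =ᶠ[nhds y] (fun z => EuclideanSpace.proj (𝕜 := ℝ) a z *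
      EuclideanSpace.proj (𝕜 := ℝ) b z * (wf R z * wf R z)) := by
    filter_upwards [IsOpen.mem_nhds isOpen_compl_singleton hy] with z hz
    have hz0 : z ≠ 0 := hz
    rw [hu z, wf_eq hR hz0, sq]
    simp
  have hu' : HasFDerivAt u _ y := huu.congr_of_eventuallyEq hev
  rw [hu'.fderiv]
  have hq0 := (qf_pos hy).ne'
  simp only [ContinuousLinearMap.add_apply, ContinuousLinearMap.smul_apply,
    ContinuousLinearMap.sum_apply, PiLp.proj_apply, EuclideanSpace.single_apply,
    smul_eq_mul, mul_ite, mul_one, mul_zero, Finset.sum_ite_eq, Finset.mem_univ, if_true,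
    ContinuousLinearMap.neg_apply, Pi.mul_apply, Finset.sum_ite_eq']
  rw [G]
  simp only [Sd]
  field_simp
  split_ifs <;> ring

lemma Sd_self {n : ℕ} (j : Fin n) : Sd j j = 1 := by simp [Sd]

lemma sum_mul_Sd {n : ℕ} (j : Fin n) (f : Fin n → ℝ) : ∑ k, f k * Sd j k = f j := by
  simp [Sd, mul_ite, Finset.sum_ite_eq, Finset.sum_ite_eq']

noncomputable def Hf {n : ℕ} (R : ℝ) (a b : Fin n) (x : EuclideanSpace ℝ (Fin n))
    (i j : Fin n) : ℝ :=
  wf R x * wf R x * (Sd i a * Sd j b + Sd i b * Sd j a)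
      - 2 * wf R x * (qf x)⁻¹ * ((x b * Sd j a + x a * Sd j b) * x i)
      - 2 * wf R x * (qf x)⁻¹ *
          (x b * x j * Sd i a + x a * x j * Sd i b + x a * x b * Sd i j)
      + 2 * (x a * x b) * (x i * x j) * (1 + 2 * wf R x) * ((qf x)⁻¹ * (qf x)⁻¹)

lemma hess_entry {n : ℕ} {R : ℝ} (hR : 0 < R) {u : EuclideanSpace ℝ (Fin n) → ℝ}
    (a b : Fin n) (hu : ∀ y, u y = y a * y b * (Real.log (R / ‖y‖))^2)
    {x : EuclideanSpace ℝ (Fin n)} (hx : x ≠ 0) (i j : Fin n) :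
    fderiv ℝ (fun y => fderiv ℝ u y (EuclideanSpace.single j 1)) x (EuclideanSpace.single i 1)
    = Hf R a b x i j := by
  rw [Hf]
  have hq0 := (qf_pos hx).ne'
  have hev : (fun y => fderiv ℝ u y (EuclideanSpace.single j 1)) =ᶠ[nhds x] G R a b j := by
    filter_upwards [IsOpen.mem_nhds isOpen_compl_singleton hx] with z hz
    exact fderiv_u_apply hR a b hu hz j
  rw [hev.fderiv_eq]
  have hw := hasFDerivAt_wf (n := n) R hx
  have hq := hasFDerivAt_qf (n := n) x
  have hG := (((hw.mul hw).mul
      ((((EuclideanSpace.proj (𝕜 := ℝ) b).hasFDerivAt (x := x)).mul_const (Sd j a)).add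
        (((EuclideanSpace.proj (𝕜 := ℝ) a).hasFDerivAt (x := x)).mul_const (Sd j b))))).sub
      ((((hw.mul ((hasDerivAt_inv hq0).comp_hasFDerivAt x hq)).mul
        (((EuclideanSpace.proj (𝕜 := ℝ) a).hasFDerivAt (x := x)).mul
          ((EuclideanSpace.proj (𝕜 := ℝ) b).hasFDerivAt (x := x)))).mul
        (((EuclideanSpace.proj (𝕜 := ℝ) j).hasFDerivAt (x := x)).const_mul 2)))
  have hGx : HasFDerivAt (G R a b j) _ x := hG
  rw [hGx.fderiv]
  simp only [ContinuousLinearMap.add_apply, ContinuousLinearMap.sub_apply,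
    ContinuousLinearMap.smul_apply, ContinuousLinearMap.sum_apply, PiLp.proj_apply,
    single_apply_Sd, smul_eq_mul, sum_mul_Sd, ContinuousLinearMap.neg_apply,
    Pi.mul_apply, Function.comp_apply, Pi.add_apply]
  field_simp
  ring

lemma Sd_of_ne {n : ℕ} {j k : Fin n} (h : k ≠ j) : Sd j k = 0 := if_neg h

lemma sum_Sd_mul' {n : ℕ} (j : Fin n) (f : Fin n → ℝ) : ∑ k, Sd k j * f k = f j := by
  simp [Sd, ite_mul, Finset.sum_ite_eq']

lemma sum_sq_qf {n : ℕ} (x : EuclideanSpace ℝ (Fin n)) : ∑ i, x i * x i = qf x := rfl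

lemma T1 {n : ℕ} (R : ℝ) (a b : Fin n) (hab : a ≠ b) (x : EuclideanSpace ℝ (Fin n)) :
    ∑ i, Hf R a b x i i
    = 2 * (x a * x b) * ((qf x)⁻¹ * (qf x)⁻¹) * qf x
      - (2 * (n:ℝ) + 4) * wf R x * (qf x)⁻¹ * (x a * x b)
      + 4 * (x a * x b) * wf R x * ((qf x)⁻¹ * (qf x)⁻¹) * qf x
      - 4 * wf R x * (qf x)⁻¹ * (x a * x b) := by
  have step : ∀ i, Hf R a b x i i
      = Sd i a * (2 * wf R x * wf R x * Sd i b - 4 * wf R x * (qf x)⁻¹ * (x b * x i))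
        + Sd i b * (-(4 * wf R x * (qf x)⁻¹ * (x a * x i)))
        + (2 * (x a * x b) * (1 + 2 * wf R x) * ((qf x)⁻¹ * (qf x)⁻¹) * (x i * x i)
            + (-(2 * wf R x * (qf x)⁻¹ * (x a * x b)))) := by
    intro i
    simp only [Hf, Sd_self]
    ring
  rw [Finset.sum_congr rfl fun i _ => step i]
  simp only [Finset.sum_add_distrib, sum_Sd_mul', ← Finset.mul_sum, sum_sq_qf,
    Finset.sum_const, Finset.card_univ, Fintype.card_fin, nsmul_eq_mul]
  simp only [Sd_of_ne hab.symm, Sd_of_ne hab]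
  ring

lemma T2 {n : ℕ} (R : ℝ) (a b : Fin n) (hab : a ≠ b) (x : EuclideanSpace ℝ (Fin n)) :
    ∑ i, ∑ j, x i * x j * Hf R a b x j i
    = 2 * (x a * x b) * (wf R x * wf R x)
      - 10 * (x a * x b) * wf R x * qf x * (qf x)⁻¹
      + 4 * (x a * x b) * wf R x * (qf x * qf x) * ((qf x)⁻¹ * (qf x)⁻¹)
      + 2 * (x a * x b) * (qf x * qf x) * ((qf x)⁻¹ * (qf x)⁻¹) := by
  have inner : ∀ i, ∑ j, x i * x j * Hf R a b x j i
      = Sd i a * (x i * x b * (wf R x * wf R x)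
            - 2 * wf R x * (qf x)⁻¹ * x b * qf x * x i)
        + Sd i b * (x i * x a * (wf R x * wf R x)
            - 2 * wf R x * (qf x)⁻¹ * x a * qf x * x i)
        + (-(6 * wf R x * (qf x)⁻¹ * (x a * x b))
            + 2 * (x a * x b) * (1 + 2 * wf R x) * ((qf x)⁻¹ * (qf x)⁻¹) * qf x)
          * (x i * x i) := by
    intro i
    have stepj : ∀ j, x i * x j * Hf R a b x j i
        = Sd j a * (x i * x j * (wf R x * wf R x * Sd i b
              - 2 * wf R x * (qf x)⁻¹ * (x b * x i)))
          + Sd j b * (x i * x j * (wf R x * wf R x * Sd i a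
              - 2 * wf R x * (qf x)⁻¹ * (x a * x i)))
          + Sd j i * (x i * x j * (-(2 * wf R x * (qf x)⁻¹ * (x a * x b))))
          + (x i * (-(2 * wf R x * (qf x)⁻¹)) * (x b * Sd i a + x a * Sd i b)
              + 2 * (x a * x b) * (1 + 2 * wf R x) * ((qf x)⁻¹ * (qf x)⁻¹) * (x i * x i))
            * (x j * x j) := by
      intro j
      simp only [Hf]
      ring
    rw [Finset.sum_congr rfl fun j _ => stepj j]
    simp only [Finset.sum_add_distrib, sum_Sd_mul', ← Finset.mul_sum, sum_sq_qf]
    ring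
  rw [Finset.sum_congr rfl fun i _ => inner i]
  simp only [Finset.sum_add_distrib, sum_Sd_mul', ← Finset.mul_sum, sum_sq_qf]
  ring

end BMOaux2

open BMOaux BMOaux2

/-- With `α r = ((2+n) log (R/r) - 1) / ((log (R/r))² - 3 log (R/r) + 1)` and
`u x = x₁ x₂ (log (R/‖x‖))²`, the function `u` solves `L_α u = 0` in the punctured
unit ball: the trace of `(I + α(‖x‖) (x/‖x‖) ⊗ (x/‖x‖)) · D²u(x)` vanishes
for `0 < ‖x‖ < 1`. -/
theorem bmo_counterexample_solves_equation
    (n : ℕ) (hn : 2 ≤ n) (R : ℝ) (hR : 1 < R)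
    (hRbig : ∀ r ∈ Ioc (0 : ℝ) 1, 0 < (log (R / r)) ^ 2 - 3 * log (R / r) + 1)
    (α : ℝ → ℝ)
    (hα : ∀ r ∈ Ioc (0 : ℝ) 1,
      α r = ((2 + (n : ℝ)) * log (R / r) - 1) /
        ((log (R / r)) ^ 2 - 3 * log (R / r) + 1))
    (u : EuclideanSpace ℝ (Fin n) → ℝ)
    (hu : ∀ x, u x = x (⟨0, by omega⟩ : Fin n) * x (⟨1, by omega⟩ : Fin n) *
      (log (R / ‖x‖)) ^ 2) :
    ∀ x : EuclideanSpace ℝ (Fin n), 0 < ‖x‖ → ‖x‖ < 1 →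
      Matrix.trace
        ((Matrix.of fun i j : Fin n =>
            (if i = j then (1 : ℝ) else 0) + α ‖x‖ * (x i / ‖x‖) * (x j / ‖x‖)) *
          (Matrix.of fun i j : Fin n =>
            fderiv ℝ (fun y => fderiv ℝ u y (EuclideanSpace.single j 1)) x
              (EuclideanSpace.single i 1)))
        = 0 := by
  intro x hx0 hx1
  have hR0 : (0:ℝ) < R := lt_trans zero_lt_one hR
  have hxne : x ≠ 0 := by
    intro h
    rw [h] at hx0
    simp at hx0
  have hq0 : qf x ≠ 0 := (qf_pos hxne).ne'
  have hnx : ‖x‖ ≠ 0 := hx0.ne'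
  set a : Fin n := ⟨0, by omega⟩ with ha
  set b : Fin n := ⟨1, by omega⟩ with hb
  have hab : a ≠ b := by
    simp [ha, hb, Fin.ext_iff]
  have key : ∀ i j : Fin n,
      fderiv ℝ (fun y => fderiv ℝ u y (EuclideanSpace.single j 1)) x
        (EuclideanSpace.single i 1) = Hf R a b x i j :=
    fun i j => hess_entry hR0 a b hu hxne i j
  have hnorm : ‖x‖ * ‖x‖ = qf x := by rw [qf_eq x, sq]
  have hW : Real.log (R / ‖x‖) = wf R x := (wf_eq hR0 hxne).symm
  have hαx : α ‖x‖ = ((2 + (n : ℝ)) * wf R x - 1) /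
      ((wf R x) ^ 2 - 3 * wf R x + 1) := by
    rw [hα ‖x‖ ⟨hx0, hx1.le⟩, hW]
  have hD : 0 < (wf R x) ^ 2 - 3 * wf R x + 1 := by
    rw [← hW]; exact hRbig ‖x‖ ⟨hx0, hx1.le⟩
  simp only [Matrix.trace, Matrix.diag_apply, Matrix.mul_apply, Matrix.of_apply]
  have hsplit : ∀ i j : Fin n,
      ((if i = j then (1:ℝ) else 0) + α ‖x‖ * (x i / ‖x‖) * (x j / ‖x‖)) *
        fderiv ℝ (fun y => fderiv ℝ u y (EuclideanSpace.single i 1)) x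
          (EuclideanSpace.single j 1)
      = (if i = j then Hf R a b x j i else 0)
        + (α ‖x‖ * (qf x)⁻¹) * (x i * x j * Hf R a b x j i) := by
    intro i j
    rw [key j i]
    have hdd : x i / ‖x‖ * (x j / ‖x‖) = x i * x j * (qf x)⁻¹ := by
      rw [div_mul_div_comm, hnorm, div_eq_mul_inv]
    rw [add_mul, ite_mul, one_mul, zero_mul, mul_assoc (α ‖x‖), hdd]
    congr 1
    ring
  rw [Finset.sum_congr rfl fun i _ => Finset.sum_congr rfl fun j _ => hsplit i j]
  simp only [Finset.sum_add_distrib, Finset.sum_ite_eq, Finset.mem_univ, if_true,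
    ← Finset.mul_sum]
  rw [T1 R a b hab x, T2 R a b hab x, hαx]
  have hDne := hD.ne'
  have hDne' : 1 - wf R x * 3 + wf R x ^ 2 ≠ 0 := by
    intro h; apply hDne; linarith
  field_simp
  have e : (1 - wf R x * 3 + wf R x ^ 2)⁻¹ * (1 - wf R x * 3 + wf R x ^ 2) = 1 :=
    inv_mul_cancel₀ hDne'
  linear_combination (-(x a * x b) * (2 - 2 * (n:ℝ) * wf R x - 4 * wf R x)) * e
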